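/- Let G = (V,E) be a connected graph and let 𝒮 = {S_1, …, S_g} be a collection of g nonempty terminal sets S_i ⊆ V. Then σ(G,𝒮) ≤ g · τ(G), i.e., the total number of distinct minimal Steiner trees over all terminal sets is at most g times the number of spanning trees of G. -/

import Mathlib

open SimpleGraph

/-- A subgraph is a spanning tree if it is a tree containing all vertices. -/
def IsSpanningTree {V : Type*} {G : SimpleGraph V} (T : G.Subgraph) : Prop :=
  T.coe.IsTree ∧ T.IsSpanning

/-- A subgraph is a minimal `S`-Steiner tree if it is a tree containing all of `S`
whose leaves (vertices of degree 1) all belong to `S`. -/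
def IsMinimalSteinerTree {V : Type*} {G : SimpleGraph V} (S : Set V) (T : G.Subgraph) : Prop :=
  T.coe.IsTree ∧ S ⊆ T.verts ∧ ∀ v ∈ T.verts, (T.neighborSet v).ncard = 1 → v ∈ S

section Aux

variable {V : Type*} {G : SimpleGraph V}

private lemma concat_isPath' {T : SimpleGraph V} {u v w : V} {p : T.Walk u v}
    (hp : p.IsPath) (h : T.Adj v w) (hw : w ∉ p.support) : (p.concat h).IsPath := by
  have h1 : (Walk.cons h.symm p.reverse).IsPath :=
    hp.reverse.cons (by simpa [Walk.support_reverse] using hw)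
  have h2 : (p.concat h).reverse.IsPath := by rwa [Walk.reverse_concat]
  simpa [Walk.concat_eq_append] using h2.reverse

private lemma path_length_eq_dist {T : SimpleGraph V} (hT : T.IsTree) {u v : V}
    {p : T.Walk u v} (hp : p.IsPath) : p.length = T.dist u v := by
  classical
  obtain ⟨q, hq⟩ := (hT.1.preconnected u v).exists_walk_length_eq_dist
  have h1 : p = q.bypass :=
    congrArg Subtype.val (hT.2.path_unique ⟨p, hp⟩ ⟨q.bypass, q.bypass_isPath⟩)
  have h0 := congrArg Walk.length h1
  have h2 : q.bypass.length ≤ q.length := q.length_bypass_le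
  have h3 := T.dist_le p
  omega

private lemma adj_dist_ne {T : SimpleGraph V} (hT : T.IsTree) {s v w : V} (h : T.Adj v w) :
    T.dist s v ≠ T.dist s w := by
  classical
  intro he
  obtain ⟨q0, _⟩ := (hT.1.preconnected s w).exists_walk_length_eq_dist
  have hq : q0.bypass.IsPath := q0.bypass_isPath
  have hlen : q0.bypass.length = T.dist s w := path_length_eq_dist hT hq
  by_cases hv : v ∈ q0.bypass.support
  · have h1 : (q0.bypass.takeUntil v hv).length = T.dist s v :=
      path_length_eq_dist hT (hq.takeUntil hv)
    have h2 := congrArg Walk.length (q0.bypass.take_spec hv)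
    rw [Walk.length_append] at h2
    have h3 : (q0.bypass.dropUntil v hv).length = 0 := by omega
    exact h.ne (Walk.eq_of_length_eq_zero h3)
  · have hp2 : (q0.bypass.concat h.symm).IsPath := concat_isPath' hq h.symm hv
    have h4 := path_length_eq_dist hT hp2
    rw [Walk.length_concat] at h4
    omega

private lemma closer_nbr {T : SimpleGraph V} (hT : T.IsTree) {s v w : V} (h : T.Adj v w)
    (hd : T.dist s w < T.dist s v) {P : T.Walk s v} (hP : P.IsPath) :
    ∃ Q : T.Walk s w, Q.IsPath ∧ P = Q.concat h.symm := by
  classical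
  obtain ⟨q0, _⟩ := (hT.1.preconnected s w).exists_walk_length_eq_dist
  have hq : q0.bypass.IsPath := q0.bypass_isPath
  have hlen : q0.bypass.length = T.dist s w := path_length_eq_dist hT hq
  have hv : v ∉ q0.bypass.support := by
    intro hv
    have h1 : (q0.bypass.takeUntil v hv).length = T.dist s v :=
      path_length_eq_dist hT (hq.takeUntil hv)
    have h2 := Walk.length_takeUntil_le q0.bypass hv
    omega
  have hp2 : (q0.bypass.concat h.symm).IsPath := concat_isPath' hq h.symm hv
  exact ⟨q0.bypass, hq, congrArg Subtype.val (hT.2.path_unique ⟨P, hP⟩ ⟨_, hp2⟩)⟩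

private lemma closer_nbr_eq {T : SimpleGraph V} (hT : T.IsTree) {s v w : V} (h : T.Adj v w)
    (hd : T.dist s w < T.dist s v) {P : T.Walk s v} (hP : P.IsPath) :
    w = P.reverse.getVert 1 := by
  classical
  obtain ⟨Q, hQ, rfl⟩ := closer_nbr hT h hd hP
  rw [Walk.reverse_concat]
  rw [show (1 : ℕ) = 0 + 1 from rfl, Walk.getVert_cons_succ, Walk.getVert_zero]

end Aux

section Aux2

variable {V : Type*} {G : SimpleGraph V}

private def homCS (H : G.Subgraph) : H.coe →g H.spanningCoe where
  toFun := Subtype.val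
  map_rel' := fun h => h

private lemma homCS_injective (H : G.Subgraph) : Function.Injective (homCS H) :=
  Subtype.val_injective

private lemma lift_walk {H : G.Subgraph} {u v : V} (p : H.spanningCoe.Walk u v) :
    ∀ (hu : u ∈ H.verts) (hv : v ∈ H.verts),
      ∃ q : H.coe.Walk ⟨u, hu⟩ ⟨v, hv⟩, q.map (homCS H) = p := by
  induction p with
  | nil => exact fun hu hv => ⟨Walk.nil, rfl⟩
  | @cons u w v h p ih =>
    intro hu hv
    have hw : w ∈ H.verts := Subgraph.Adj.snd_mem (h : H.Adj u w)
    obtain ⟨q, hq⟩ := ih hw hv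
    exact ⟨Walk.cons (by exact h : H.coe.Adj ⟨u, hu⟩ ⟨w, hw⟩) q, by subst hq; rfl⟩

private lemma coe_acyclic_iff (H : G.Subgraph) :
    H.coe.IsAcyclic ↔ H.spanningCoe.IsAcyclic := by
  constructor
  · intro hA v c hc
    have hv : v ∈ H.verts := by
      cases c with
      | nil => exact absurd hc Walk.IsCycle.not_of_nil
      | cons h p => exact Subgraph.Adj.fst_mem (h : H.Adj v _)
    obtain ⟨q, hq⟩ := lift_walk c hv hv
    have hqc : (q.map (homCS H)).IsCycle := hq ▸ hc
    exact hA q ((Walk.map_isCycle_iff_of_injective (homCS_injective H)).mp hqc)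
  · intro hA v c hc
    exact hA _ ((Walk.map_isCycle_iff_of_injective (f := homCS H)
      (homCS_injective H)).mpr hc)

private lemma coe_isTree_iff (H : G.Subgraph) :
    H.coe.IsTree ↔ H.Connected ∧ H.spanningCoe.IsAcyclic := by
  rw [isTree_iff, ← Subgraph.connected_iff', coe_acyclic_iff]

private lemma no_cycle_at_pendant {T : SimpleGraph V} {a b : V}
    (hnb : ∀ x, T.Adj b x → x = a) (c : T.Walk b b) : ¬c.IsCycle := by
  intro hc
  cases c with
  | nil => exact Walk.IsCycle.not_of_nil hc
  | @cons _ x _ hadj q =>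
    have hx := hnb _ hadj
    subst hx
    rw [Walk.cons_isCycle_iff] at hc
    obtain ⟨hq, he⟩ := hc
    apply he
    have hqr : q.reverse.IsPath := hq.reverse
    cases hqr' : q.reverse with
    | nil => exact absurd rfl hadj.ne
    | @cons _ y _ h₂ r =>
      have hy := hnb _ h₂
      subst hy
      have hr : r.IsPath := by rw [hqr'] at hqr; exact hqr.of_cons
      have hrnil : r = Walk.nil := Walk.isPath_iff_eq_nil.mp hr
      subst hrnil
      rw [← List.mem_reverse, ← Walk.edges_reverse, hqr']
      simp

end Aux2


section Aux3

variable {V : Type*} {G : SimpleGraph V}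

private lemma pendant_isTree {H : G.Subgraph} (hH : H.coe.IsTree) {a b : V}
    (hab : G.Adj a b) (ha : a ∈ H.verts) (hb : b ∉ H.verts) :
    (H ⊔ G.subgraphOfAdj hab).coe.IsTree := by
  classical
  rw [coe_isTree_iff] at hH ⊢
  obtain ⟨hconn, hacyc⟩ := hH
  have hnb : ∀ x, (H ⊔ G.subgraphOfAdj hab).spanningCoe.Adj b x → x = a := by
    intro x hx
    rcases hx with hx | hx
    · exact absurd (Subgraph.Adj.fst_mem hx) hb
    · simp only [subgraphOfAdj_adj] at hx
      rw [Sym2.eq_iff] at hx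
      rcases hx with ⟨h1, h2⟩ | ⟨h1, h2⟩
      · exact absurd h1 hab.ne
      · exact h1.symm
  refine ⟨Subgraph.connected_sup hconn.preconnected (Subgraph.subgraphOfAdj_connected hab).preconnected ⟨a, ha, by simp⟩, ?_⟩
  intro v c hc
  by_cases hbs : b ∈ c.support
  · exact no_cycle_at_pendant hnb (c.rotate _ hbs) (hc.rotate hbs)
  · have hedges : ∀ e ∈ c.edges, e ∈ H.spanningCoe.edgeSet := by
      intro e he
      induction e with
      | h x y =>
        have hadj : (H ⊔ G.subgraphOfAdj hab).Adj x y := c.edges_subset_edgeSet he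
        have hx : x ≠ b := fun h => hbs (h ▸ c.fst_mem_support_of_mem_edges he)
        have hy : y ≠ b := fun h => hbs (h ▸ c.snd_mem_support_of_mem_edges he)
        rcases hadj with hadj | hadj
        · exact hadj
        · simp only [subgraphOfAdj_adj] at hadj
          rw [Sym2.eq_iff] at hadj
          rcases hadj with ⟨h1, h2⟩ | ⟨h1, h2⟩
          · exact absurd h2.symm hy
          · exact absurd h2.symm hx
    exact hacyc _ (hc.transfer hedges)

private lemma exists_spanning_ext [Fintype V] (hG : G.Connected) :
    ∀ (k : ℕ) (H : G.Subgraph), Fintype.card V ≤ H.verts.ncard + k → H.coe.IsTree →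
      ∃ T' : G.Subgraph, IsSpanningTree T' ∧ H ≤ T' := by
  intro k
  induction k with
  | zero =>
    intro H hcard hH
    refine ⟨H, ⟨hH, fun v => ?_⟩, le_refl H⟩
    by_contra hv
    have hlt : H.verts.ncard < Fintype.card V := by
      have h1 : H.verts ⊂ Set.univ := ⟨Set.subset_univ _, fun h => hv (h (Set.mem_univ v))⟩
      have := Set.ncard_lt_ncard h1 (Set.toFinite _)
      rwa [Set.ncard_univ, Nat.card_eq_fintype_card] at this
    omega
  | succ k ih =>
    intro H hcard hH
    by_cases hsp : H.IsSpanning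
    · exact ⟨H, ⟨hH, hsp⟩, le_refl H⟩
    · have hv : ∃ v, v ∉ H.verts := by
        by_contra h
        push_neg at h
        exact hsp h
      obtain ⟨v, hv⟩ := hv
      have hne : H.verts.Nonempty := (Subgraph.connected_iff'.mpr hH.1).nonempty
      obtain ⟨u, hu⟩ := hne
      obtain ⟨p⟩ := hG.preconnected u v
      obtain ⟨d, _, hd1, hd2⟩ := p.exists_boundary_dart H.verts hu hv
      have hKtree := pendant_isTree hH d.adj hd1 hd2
      have hKverts : (H ⊔ G.subgraphOfAdj d.adj).verts = insert d.snd H.verts := by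
        rw [Subgraph.verts_sup, subgraphOfAdj_verts]
        ext x
        simp only [Set.mem_union, Set.mem_insert_iff, Set.mem_singleton_iff]
        constructor
        · rintro (h | h | h)
          · exact Or.inr h
          · exact Or.inr (h ▸ hd1)
          · exact Or.inl h
        · rintro (h | h)
          · exact Or.inr (Or.inr h)
          · exact Or.inl h
      have hKcard : Fintype.card V ≤ (H ⊔ G.subgraphOfAdj d.adj).verts.ncard + k := by
        rw [hKverts, Set.ncard_insert_of_notMem hd2 (Set.toFinite _)]
        omega
      obtain ⟨T', hT', hle⟩ := ih _ hKcard hKtree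
      exact ⟨T', hT', le_trans le_sup_left hle⟩

end Aux3

section Aux4

variable {V : Type*} {G : SimpleGraph V}

private lemma spanningCoe_edgeSet_eq (H : G.Subgraph) :
    H.spanningCoe.edgeSet = H.edgeSet := by
  ext e
  induction e with
  | h x y => exact Iff.rfl

private lemma path_of_sub {T' H : G.Subgraph} (hle : H ≤ T') (hconn : H.Connected)
    {u v : V} (hu : u ∈ H.verts) (hv : v ∈ H.verts) :
    ∃ q : T'.spanningCoe.Walk u v, q.IsPath ∧ (∀ x ∈ q.support, x ∈ H.verts) ∧
      ∀ e ∈ q.edges, e ∈ H.edgeSet := by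
  classical
  obtain ⟨p, hp⟩ :=
    ((Subgraph.preconnected_iff_forall_exists_walk_subgraph H).mp hconn.preconnected) hu hv
  have hsub : p.toSubgraph ≤ T' := le_trans hp hle
  have hedH : ∀ e ∈ p.edges, e ∈ H.edgeSet := by
    intro e he
    exact Subgraph.edgeSet_mono hp ((p.edgeSet_toSubgraph ▸ he : e ∈ p.toSubgraph.edgeSet))
  have hed : ∀ e ∈ p.edges, e ∈ T'.spanningCoe.edgeSet := by
    intro e he
    rw [spanningCoe_edgeSet_eq]
    exact Subgraph.edgeSet_mono hsub (p.edgeSet_toSubgraph ▸ he)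
  set q0 := p.transfer T'.spanningCoe hed with hq0
  refine ⟨q0.bypass, q0.bypass_isPath, ?_, ?_⟩
  · intro x hx
    have h1 : x ∈ q0.support := q0.support_bypass_subset hx
    rw [hq0, Walk.support_transfer] at h1
    exact hp.1 ((p.mem_verts_toSubgraph).mpr h1)
  · intro e he
    have h1 : e ∈ q0.edges := q0.edges_bypass_subset he
    rw [hq0, Walk.edges_transfer] at h1
    exact hedH e h1

private lemma path_support_sub {T' H : G.Subgraph} (hT : T'.spanningCoe.IsTree)
    (hle : H ≤ T') (hconn : H.Connected) {u v : V} (hu : u ∈ H.verts) (hv : v ∈ H.verts)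
    {P : T'.spanningCoe.Walk u v} (hP : P.IsPath) :
    (∀ x ∈ P.support, x ∈ H.verts) ∧ ∀ e ∈ P.edges, e ∈ H.edgeSet := by
  obtain ⟨q, hq, hs, he⟩ := path_of_sub hle hconn hu hv
  have hPq : P = q := congrArg Subtype.val (hT.2.path_unique ⟨P, hP⟩ ⟨q, hq⟩)
  rw [hPq]
  exact ⟨hs, he⟩

private lemma adj_sub {T' H : G.Subgraph} (hT : T'.spanningCoe.IsTree)
    (hle : H ≤ T') (hconn : H.Connected) {u v : V} (hu : u ∈ H.verts) (hv : v ∈ H.verts)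
    (h : T'.spanningCoe.Adj u v) : H.Adj u v := by
  have hP : (Walk.cons h Walk.nil).IsPath := by
    simp [Walk.isPath_def, h.ne]
  have := (path_support_sub hT hle hconn hu hv hP).2 s(u, v) (by simp)
  exact this

private lemma spanningCoe_isTree {T' : G.Subgraph} (h : IsSpanningTree T') :
    T'.spanningCoe.IsTree := by
  obtain ⟨htree, hsp⟩ := h
  constructor
  · rw [connected_iff]
    refine ⟨fun u v => Reachable.map (homCS T')
      (htree.1.preconnected ⟨u, hsp u⟩ ⟨v, hsp v⟩), ?_⟩
    obtain ⟨x⟩ := htree.1.nonempty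
    exact ⟨x.1⟩
  · exact (coe_acyclic_iff T').mp htree.2

end Aux4

section Aux5

variable {V : Type*} {G : SimpleGraph V}

private lemma steiner_verts_sub {T' : G.Subgraph} (hT' : IsSpanningTree T')
    {Sset : Set V} (hSne : Sset.Nonempty) {T₁ T₂ : G.Subgraph}
    (h₁ : IsMinimalSteinerTree Sset T₁) (h₂ : IsMinimalSteinerTree Sset T₂)
    (le₁ : T₁ ≤ T') (le₂ : T₂ ≤ T') (hfin : T₁.verts.Finite) : T₁.verts ⊆ T₂.verts := by
  classical
  have hT : T'.spanningCoe.IsTree := spanningCoe_isTree hT'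
  set T := T'.spanningCoe with hTdef
  obtain ⟨s, hsS⟩ := hSne
  have hs1 : s ∈ T₁.verts := h₁.2.1 hsS
  have hs2 : s ∈ T₂.verts := h₂.2.1 hsS
  by_contra hns
  rw [Set.not_subset] at hns
  have hA : (T₁.verts \ T₂.verts).Nonempty := by
    obtain ⟨x, h1, h2⟩ := hns; exact ⟨x, h1, h2⟩
  obtain ⟨v, hvA, hmax⟩ := Set.exists_max_image _ (fun x => T.dist s x)
    (hfin.subset Set.diff_subset) hA
  have hv1 : v ∈ T₁.verts := hvA.1
  have hv2 : v ∉ T₂.verts := hvA.2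
  have hvs : v ≠ s := fun h => hv2 (h ▸ hs2)
  have conn₁ : T₁.Connected := Subgraph.connected_iff'.mpr h₁.1.1
  have conn₂ : T₂.Connected := Subgraph.connected_iff'.mpr h₂.1.1
  have hnbne : (T₁.neighborSet v).Nonempty := by
    obtain ⟨p, hp⟩ := ((Subgraph.preconnected_iff_forall_exists_walk_subgraph T₁).mp
      conn₁.preconnected) hv1 hs1
    have hlen : 0 < p.length := by
      cases p with
      | nil => exact absurd rfl hvs
      | cons _ _ => simp
    have hadj := p.toSubgraph_adj_getVert hlen
    rw [p.getVert_zero] at hadj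
    exact ⟨_, hp.2 hadj⟩
  have hTadj : ∀ {w}, T₁.Adj v w → T.Adj v w := fun h => le₁.2 h
  by_cases hfar : ∃ w ∈ T₁.neighborSet v, T.dist s v < T.dist s w
  · obtain ⟨w, hwnb, hwd⟩ := hfar
    have hw1 : w ∈ T₁.verts := Subgraph.Adj.snd_mem hwnb
    have hw2 : w ∈ T₂.verts := by
      by_contra hw2
      exact absurd (hmax w ⟨hw1, hw2⟩) (not_le.mpr hwd)
    obtain ⟨q, hq, hsup, _⟩ := path_of_sub le₂ conn₂ hs2 hw2
    obtain ⟨Q, hQ, hPeq⟩ := closer_nbr hT (hTadj hwnb).symm hwd hq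
    have hvq : v ∈ q.support := by
      rw [hPeq, Walk.support_concat]
      simp only [List.concat_eq_append, List.mem_append]
      exact Or.inl Q.end_mem_support
    exact hv2 (hsup v hvq)
  · push_neg at hfar
    obtain ⟨P0, _⟩ := (hT.1.preconnected s v).exists_walk_length_eq_dist
    have hP : P0.bypass.IsPath := P0.bypass_isPath
    have hsingle : ∀ w ∈ T₁.neighborSet v, w = P0.bypass.reverse.getVert 1 := by
      intro w hw
      have hTa : T.Adj v w := hTadj hw
      have hne : T.dist s v ≠ T.dist s w := adj_dist_ne hT hTa
      have hlt : T.dist s w < T.dist s v := lt_of_le_of_ne (hfar w hw) (Ne.symm hne)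
      exact closer_nbr_eq hT hTa hlt hP
    have hncard : (T₁.neighborSet v).ncard = 1 := by
      obtain ⟨w₀, hw₀⟩ := hnbne
      rw [Set.ncard_eq_one]
      exact ⟨w₀, Set.eq_singleton_iff_unique_mem.mpr
        ⟨hw₀, fun y hy => (hsingle y hy).trans (hsingle w₀ hw₀).symm⟩⟩
    exact hv2 (h₂.2.1 (h₁.2.2 v hv1 hncard))

private lemma steiner_unique {T' : G.Subgraph} (hT' : IsSpanningTree T')
    {Sset : Set V} (hSne : Sset.Nonempty) {T₁ T₂ : G.Subgraph}
    (h₁ : IsMinimalSteinerTree Sset T₁) (h₂ : IsMinimalSteinerTree Sset T₂)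
    (le₁ : T₁ ≤ T') (le₂ : T₂ ≤ T') (hfin1 : T₁.verts.Finite) (hfin2 : T₂.verts.Finite) :
    T₁ = T₂ := by
  have hveq : T₁.verts = T₂.verts :=
    subset_antisymm (steiner_verts_sub hT' hSne h₁ h₂ le₁ le₂ hfin1)
      (steiner_verts_sub hT' hSne h₂ h₁ le₂ le₁ hfin2)
  have hT : T'.spanningCoe.IsTree := spanningCoe_isTree hT'
  have conn₁ : T₁.Connected := Subgraph.connected_iff'.mpr h₁.1.1
  have conn₂ : T₂.Connected := Subgraph.connected_iff'.mpr h₂.1.1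
  refine Subgraph.ext hveq ?_
  ext u v
  constructor
  · intro h
    exact adj_sub hT le₂ conn₂ (hveq ▸ Subgraph.Adj.fst_mem h)
      (hveq ▸ Subgraph.Adj.snd_mem h) (le₁.2 h)
  · intro h
    exact adj_sub hT le₁ conn₁ (hveq ▸ Subgraph.Adj.fst_mem h)
      (hveq ▸ Subgraph.Adj.snd_mem h) (le₂.2 h)

end Aux5

/-- `σ(G, 𝒮) ≤ g · τ(G)`: the number of pairs `(i, T)` where `T` is a minimal
`S i`-Steiner tree is at most `g` times the number of spanning trees of `G`. -/
theorem stmt1 {V : Type*} [Fintype V] (G : SimpleGraph V) (hG : G.Connected)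
    (g : ℕ) (S : Fin g → Set V) (hS : ∀ i, (S i).Nonempty) :
    {p : Fin g × G.Subgraph | IsMinimalSteinerTree (S p.1) p.2}.ncard
      ≤ g * {T : G.Subgraph | IsSpanningTree T}.ncard := by
  classical
  have hfinsub : Finite G.Subgraph :=
    Finite.of_injective (fun H : G.Subgraph => (H.verts, H.Adj))
      (fun a b h => Subgraph.ext (congrArg Prod.fst h) (congrArg Prod.snd h))
  set L := {p : Fin g × G.Subgraph | IsMinimalSteinerTree (S p.1) p.2} with hL
  set Sp := {T : G.Subgraph | IsSpanningTree T} with hSp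
  have hchoice : ∀ x : L, ∃ T' : G.Subgraph, IsSpanningTree T' ∧ x.1.2 ≤ T' := by
    intro x
    exact exists_spanning_ext hG (Fintype.card V) x.1.2
      (Nat.le_add_left _ _) x.2.1
  choose F hF1 hF2 using hchoice
  have hinj : Function.Injective (fun x : L => ((x.1.1, ⟨F x, hF1 x⟩) : Fin g × Sp)) := by
    intro x y hxy
    simp only [Prod.mk.injEq, Subtype.mk.injEq] at hxy
    obtain ⟨h1, h2⟩ := hxy
    have hx2 : IsMinimalSteinerTree (S x.1.1) x.1.2 := x.2
    have hy2 : IsMinimalSteinerTree (S x.1.1) y.1.2 := h1 ▸ y.2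
    have heq : x.1.2 = y.1.2 :=
      steiner_unique (hF1 x) (hS x.1.1) hx2 hy2 (hF2 x) (h2 ▸ hF2 y)
        (Set.toFinite _) (Set.toFinite _)
    apply Subtype.ext
    exact Prod.ext h1 heq
  calc L.ncard = Nat.card L := (Nat.card_coe_set_eq L).symm
    _ ≤ Nat.card (Fin g × Sp) := Nat.card_le_card_of_injective _ hinj
    _ = g * Sp.ncard := by
        rw [Nat.card_prod, Nat.card_eq_fintype_card, Fintype.card_fin,
          Nat.card_coe_set_eq]
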